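/- The least-squares problem min_α ‖S − Φ D_α V_and‖_F², with Φ = UΣ_w W (columns being DMD modes scaled in a POD basis), reduces to the quadratic program min_α α*Pα − q*α − α*q + s with P = (W*W) ∘ conj(V_and V_and*) and q = conj(diag(V_and V Σ* W)); if P is Hermitian positive definite, the unique minimizer is α_opt = P^{-1}q. -/

import Mathlib

open Matrix
open scoped ComplexOrder

/-- Optimal DMD amplitudes (Jovanović–Schmid–Nichols): with the reduced SVD
`S = UΣVᴴ`, the objective `‖S - Φ D_α V_and‖_F²` with `Φ` the DMD modes
expressed in the POD basis (`Φ = U W`) reduces to the quadratic form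
`α*Pα - q*α - α*q + s`, `P = (WᴴW) ∘ conj(V_and V_andᴴ)`,
`q = conj(diag(V_and V Σᴴ W))`, `s = tr(ΣᴴΣ)`; if `P` is Hermitian positive
definite, the unique minimizer is `α_opt = P⁻¹q`. -/
theorem dmd_optimal_amplitudes {N r J : ℕ}
    (S : Matrix (Fin N) (Fin J) ℂ) (U : Matrix (Fin N) (Fin r) ℂ)
    (Sg : Matrix (Fin r) (Fin r) ℂ) (V : Matrix (Fin J) (Fin r) ℂ)
    (hSVD : S = U * Sg * Vᴴ) (hU : Uᴴ * U = 1) (hV : Vᴴ * V = 1)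
    (W : Matrix (Fin r) (Fin r) ℂ) (Vand : Matrix (Fin r) (Fin J) ℂ)
    (P : Matrix (Fin r) (Fin r) ℂ) (q : Fin r → ℂ) (s : ℂ)
    (hP : P = (Wᴴ * W).hadamard ((Vand * Vandᴴ).map (starRingEnd ℂ)))
    (hq : q = fun i => starRingEnd ℂ ((Vand * V * Sgᴴ * W) i i))
    (hs : s = (Sgᴴ * Sg).trace)
    (obj : (Fin r → ℂ) → ℝ)
    (hobj : ∀ a, obj a
        = ∑ i, ∑ k, ‖(S - U * W * Matrix.diagonal a * Vand) i k‖ ^ 2) :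
    (∀ a : Fin r → ℂ,
      (obj a : ℂ) = star a ⬝ᵥ (P *ᵥ a) - star q ⬝ᵥ a - star a ⬝ᵥ q + s) ∧
    (P.PosDef →
      (∀ a : Fin r → ℂ, obj (P⁻¹ *ᵥ q) ≤ obj a) ∧
      (∀ a : Fin r → ℂ, obj a = obj (P⁻¹ *ᵥ q) → a = P⁻¹ *ᵥ q)) := by
  classical
  have hUc : ∀ {p : ℕ} (X : Matrix (Fin r) (Fin p) ℂ), Uᴴ * (U * X) = X := by
    intro p X; rw [← Matrix.mul_assoc, hU, Matrix.one_mul]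
  have hVc : ∀ {p : ℕ} (X : Matrix (Fin r) (Fin p) ℂ), Vᴴ * (V * X) = X := by
    intro p X; rw [← Matrix.mul_assoc, hV, Matrix.one_mul]
  have htd : ∀ (d : Fin r → ℂ) (B : Matrix (Fin r) (Fin r) ℂ),
      (Matrix.diagonal d * B).trace = ∑ i, d i * B i i := by
    intro d B
    simp [Matrix.trace, Matrix.diag, Matrix.diagonal_mul]
  have hR : ∀ i j, (starRingEnd ℂ) ((Vand * Vandᴴ) i j) = (Vand * Vandᴴ) j i := by
    intro i j
    simpa [Matrix.conjTranspose_apply] using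
      congrFun (congrFun (Matrix.isHermitian_mul_conjTranspose_self Vand).eq j) i
  have key : ∀ a : Fin r → ℂ,
      (obj a : ℂ) = star a ⬝ᵥ (P *ᵥ a) - star q ⬝ᵥ a - star a ⬝ᵥ q + s := by
    intro a
    set D : Matrix (Fin r) (Fin r) ℂ := Matrix.diagonal a with hD
    set M : Matrix (Fin N) (Fin J) ℂ := U * W * D * Vand with hM
    have h1 : (obj a : ℂ) = ((S - M)ᴴ * (S - M)).trace := by
      rw [hobj]
      push_cast
      rw [Matrix.trace]
      rw [Finset.sum_comm]
      refine Finset.sum_congr rfl fun i _ => ?_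
      simp only [Matrix.diag, Matrix.mul_apply, Matrix.conjTranspose_apply]
      refine Finset.sum_congr rfl fun k _ => ?_
      rw [RCLike.star_def, mul_comm, Complex.mul_conj']
    have h2 : ((S - M)ᴴ * (S - M)) = Sᴴ * S - Sᴴ * M - Mᴴ * S + Mᴴ * M := by
      rw [Matrix.conjTranspose_sub, Matrix.sub_mul, Matrix.mul_sub, Matrix.mul_sub]
      abel
    have tS : (Sᴴ * S).trace = s := by
      rw [hSVD, hs]
      simp only [Matrix.conjTranspose_mul, Matrix.conjTranspose_conjTranspose,
        Matrix.mul_assoc, hUc]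
      rw [Matrix.trace_mul_comm V]
      simp only [Matrix.mul_assoc, hV, Matrix.mul_one]
    have tSM : (Sᴴ * M).trace = star q ⬝ᵥ a := by
      rw [hSVD, hM]
      simp only [Matrix.conjTranspose_mul, Matrix.conjTranspose_conjTranspose,
        Matrix.mul_assoc, hUc]
      rw [Matrix.trace_mul_comm V]
      simp only [Matrix.mul_assoc]
      rw [Matrix.trace_mul_comm Sgᴴ]
      simp only [Matrix.mul_assoc]
      rw [Matrix.trace_mul_comm W]
      simp only [Matrix.mul_assoc]
      rw [hD, htd]
      rw [dotProduct]
      refine Finset.sum_congr rfl fun i _ => ?_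
      rw [mul_comm]
      congr 1
      rw [hq]
      simp [Matrix.mul_assoc]
    have tMS : (Mᴴ * S).trace = star a ⬝ᵥ q := by
      have h3 : Mᴴ * S = (Sᴴ * M)ᴴ := by
        conv_rhs => rw [Matrix.conjTranspose_mul, Matrix.conjTranspose_conjTranspose]
      rw [h3, Matrix.trace_conjTranspose, tSM, Matrix.star_dotProduct, star_star]
    have tMM : (Mᴴ * M).trace = star a ⬝ᵥ (P *ᵥ a) := by
      rw [hM]
      simp only [Matrix.conjTranspose_mul, Matrix.mul_assoc, hUc]
      rw [Matrix.trace_mul_comm Vandᴴ]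
      simp only [Matrix.mul_assoc]
      rw [hD, Matrix.diagonal_conjTranspose, ← Matrix.mul_assoc Wᴴ W, htd]
      rw [dotProduct]
      refine Finset.sum_congr rfl fun i _ => ?_
      rw [Matrix.mulVec, dotProduct, Finset.mul_sum, Matrix.mul_apply,
        Finset.mul_sum]
      refine Finset.sum_congr rfl fun j _ => ?_
      rw [Matrix.diagonal_mul, hP]
      simp only [Matrix.hadamard_apply, Matrix.map_apply, hR]
      ring
    rw [h1, h2, Matrix.trace_add, Matrix.trace_sub, Matrix.trace_sub, tS, tSM, tMS, tMM]
    ring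
  refine ⟨key, fun hPD => ?_⟩
  set a₀ : Fin r → ℂ := P⁻¹ *ᵥ q with ha₀
  have hPa₀ : P *ᵥ a₀ = q := by
    rw [ha₀, Matrix.mulVec_mulVec,
      Matrix.mul_nonsing_inv P (isUnit_iff_ne_zero.mpr hPD.det_pos.ne'),
      Matrix.one_mulVec]
  have e0 : star q = star a₀ ᵥ* P := by
    rw [← hPa₀, Matrix.star_mulVec, hPD.1.eq]
  have hdiff : ∀ a : Fin r → ℂ,
      ((obj a - obj a₀ : ℝ) : ℂ) = star (a - a₀) ⬝ᵥ (P *ᵥ (a - a₀)) := by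
    intro a
    push_cast
    rw [key a, key a₀]
    have e1 : star a ⬝ᵥ (P *ᵥ a₀) = star a ⬝ᵥ q := by rw [hPa₀]
    have e2 : star a₀ ⬝ᵥ (P *ᵥ a) = star q ⬝ᵥ a := by
      rw [Matrix.dotProduct_mulVec, ← e0]
    have e3 : star a₀ ⬝ᵥ (P *ᵥ a₀) = star a₀ ⬝ᵥ q := by rw [hPa₀]
    have e4 : star q ⬝ᵥ a₀ = star a₀ ⬝ᵥ q := by
      rw [e0, ← Matrix.dotProduct_mulVec, hPa₀]
    have expand : star (a - a₀) ⬝ᵥ (P *ᵥ (a - a₀))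
        = star a ⬝ᵥ (P *ᵥ a) - star a ⬝ᵥ (P *ᵥ a₀) - star a₀ ⬝ᵥ (P *ᵥ a)
          + star a₀ ⬝ᵥ (P *ᵥ a₀) := by
      simp only [star_sub, Matrix.mulVec_sub, sub_dotProduct, dotProduct_sub]
      ring
    rw [expand, e1, e2, e3, e4]
    ring
  have hlt : ∀ a : Fin r → ℂ, a ≠ a₀ → obj a₀ < obj a := by
    intro a ha
    have hx : a - a₀ ≠ 0 := sub_ne_zero.mpr ha
    have h5 := (Matrix.posDef_iff_dotProduct_mulVec.mp hPD).2 hx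
    rw [← hdiff a, Complex.zero_lt_real] at h5
    linarith
  constructor
  · intro a
    by_cases h : a = a₀
    · rw [h]
    · exact (hlt a h).le
  · intro a h
    by_contra hne
    exact absurd h (ne_of_gt (hlt a hne))
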